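/- Fix R > 0 real, ħ ∈ ℂ with ħ ≠ 0, and z ∈ ℂ. Let λ be a positive real-valued function on ℂ that is twice continuously real-differentiable near z, and let P : ℂ → ℂ be holomorphic near z. Define the 2×2 matrix-valued functions A₁(w) = ħ⁻¹·[[0, P(w)], [1, 0]] − (∂_w log λ(w))·diag(1, −1) and A₂(w) = R²ħ·[[0, λ(w)²], [λ(w)⁻²·conj(P(w)), 0]]. Then ∂_z A₂(z) − ∂_z̄ A₁(z) + [A₁(z), A₂(z)] = (∂_z̄ ∂_z log λ(z) − R²·(λ(z)² − λ(z)⁻²·|P(z)|²))·diag(1, −1). (This computes the curvature of the connection d + A₁ dz + A₂ dz̄ of the rescaled Hitchin family for SL(2,ℂ): the connection is flat precisely when λ satisfies the rescaled Hitchin equation ∂_z̄ ∂_z log λ = R²(λ² − λ⁻²|P|²).) -/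

import Mathlib

open Matrix Complex

attribute [local instance] Matrix.normedAddCommGroup Matrix.normedSpace

/-- The Wirtinger derivative `∂_z F(z) = ½(DF(z)(1) - i·DF(z)(i))`, where `DF(z)` is the
real Fréchet derivative. -/
noncomputable def dz {E : Type*} [NormedAddCommGroup E] [NormedSpace ℂ E]
    (F : ℂ → E) (z : ℂ) : E :=
  (2⁻¹ : ℂ) • (fderiv ℝ F z 1 - Complex.I • fderiv ℝ F z Complex.I)

/-- The Wirtinger derivative `∂_z̄ F(z) = ½(DF(z)(1) + i·DF(z)(i))`. -/
noncomputable def dzbar {E : Type*} [NormedAddCommGroup E] [NormedSpace ℂ E]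
    (F : ℂ → E) (z : ℂ) : E :=
  (2⁻¹ : ℂ) • (fderiv ℝ F z 1 + Complex.I • fderiv ℝ F z Complex.I)


section aux
variable {E : Type*} [NormedAddCommGroup E] [NormedSpace ℂ E] {z : ℂ}

lemma dz_eval' {F : ℂ → ℂ} {F' : ℂ →L[ℝ] ℂ} (h : HasFDerivAt F F' z) :
    dz F z = 2⁻¹ * (F' 1 - Complex.I * F' Complex.I) := by
  unfold dz; rw [h.fderiv]; simp [smul_eq_mul]

lemma dz_comb2 (f g : ℂ → ℂ) {f' g' : ℂ →L[ℝ] ℂ} (hf : HasFDerivAt f f' z)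
    (hg : HasFDerivAt g g' z) (M N : E) :
    dz (fun w => f w • M + g w • N) z = dz f z • M + dz g z • N := by
  have h : fderiv ℝ (fun w => f w • M + g w • N) z = _ :=
    ((hf.smul_const M).add (hg.smul_const N)).fderiv
  unfold dz; rw [h, hf.fderiv, hg.fderiv]
  simp only [ContinuousLinearMap.add_apply, ContinuousLinearMap.smulRight_apply, smul_eq_mul]
  module

lemma dzbar_comb3 (f g : ℂ → ℂ) {f' g' : ℂ →L[ℝ] ℂ} (hf : HasFDerivAt f f' z)
    (hg : HasFDerivAt g g' z) (M C S : E) :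
    dzbar (fun w => f w • M + C - g w • S) z = dzbar f z • M - dzbar g z • S := by
  have h : fderiv ℝ (fun w => f w • M + C - g w • S) z = _ :=
    (((hf.smul_const M).add_const C).sub (hg.smul_const S)).fderiv
  unfold dzbar; rw [h, hf.fderiv, hg.fderiv]
  simp only [ContinuousLinearMap.sub_apply, ContinuousLinearMap.add_apply,
    ContinuousLinearMap.smulRight_apply, smul_eq_mul]
  module

lemma dzbar_holo {f : ℂ → ℂ} (hf : DifferentiableAt ℂ f z) : dzbar f z = 0 := by
  have h := (hf.hasFDerivAt.restrictScalars ℝ).fderiv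
  have hI : (fderiv ℂ f z) Complex.I = Complex.I * (fderiv ℂ f z) 1 := by
    simpa [smul_eq_mul] using (fderiv ℂ f z).map_smul Complex.I 1
  unfold dzbar; rw [h]
  simp only [ContinuousLinearMap.coe_restrictScalars', hI, smul_eq_mul]
  have h2 : (Complex.I : ℂ) * Complex.I = -1 := Complex.I_mul_I
  linear_combination (2⁻¹ * (fderiv ℂ f z) 1) * h2

end aux

set_option maxHeartbeats 1000000 in
/-- Curvature of the rescaled SL(2,ℂ) Hitchin-family connection `d + A₁ dz + A₂ dz̄`:
`∂_z A₂ - ∂_z̄ A₁ + [A₁, A₂]` equals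
`(∂_z̄ ∂_z log λ - R²(λ² - λ⁻²|P|²))·diag(1,-1)`. -/
theorem hitchin_curvature_SL2 (R : ℝ) (hR : 0 < R) (hbar : ℂ) (hh : hbar ≠ 0) (z : ℂ)
    (lam : ℂ → ℝ) (hlampos : ∀ w, 0 < lam w)
    (hlam : ∀ᶠ w in nhds z, ContDiffAt ℝ 2 lam w)
    (P : ℂ → ℂ) (hP : ∀ᶠ w in nhds z, DifferentiableAt ℂ P w)
    (logLam : ℂ → ℂ) (hlog : logLam = fun w => (Real.log (lam w) : ℂ))
    (A₁ A₂ : ℂ → Matrix (Fin 2) (Fin 2) ℂ)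
    (hA₁ : A₁ = fun w => hbar⁻¹ • (!![0, P w; 1, 0] : Matrix (Fin 2) (Fin 2) ℂ)
      - dz logLam w • (!![1, 0; 0, -1] : Matrix (Fin 2) (Fin 2) ℂ))
    (hA₂ : A₂ = fun w => ((R : ℂ) ^ 2 * hbar) •
      (!![0, ((lam w : ℂ)) ^ 2; ((lam w : ℂ)) ^ (-2 : ℤ) * (starRingEnd ℂ) (P w), 0] :
        Matrix (Fin 2) (Fin 2) ℂ)) :
    dz A₂ z - dzbar A₁ z + (A₁ z * A₂ z - A₂ z * A₁ z)
      = (dzbar (fun w => dz logLam w) z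
          - (R : ℂ) ^ 2 * (((lam z : ℂ)) ^ 2
              - ((lam z : ℂ)) ^ (-2 : ℤ) * ((‖P z‖ : ℝ) : ℂ) ^ 2)) •
        (!![1, 0; 0, -1] : Matrix (Fin 2) (Fin 2) ℂ) := by
  subst hlog
  -- basic facts
  have hlz : lam z ≠ 0 := (hlampos z).ne'
  have hlzc : ((lam z : ℝ) : ℂ) ≠ 0 := Complex.ofReal_ne_zero.2 hlz
  have hlamz : ContDiffAt ℝ 2 lam z := hlam.self_of_nhds
  have hP0 : DifferentiableAt ℂ P z := hP.self_of_nhds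
  have hld : HasFDerivAt lam (fderiv ℝ lam z) z :=
    (hlamz.differentiableAt (by norm_num)).hasFDerivAt
  set l := fderiv ℝ lam z with hl
  set u : ℝ := l 1 with hu
  set v : ℝ := l Complex.I with hv
  have hPI : fderiv ℂ P z Complex.I = Complex.I * fderiv ℂ P z 1 := by
    have h := ContinuousLinearMap.map_smul (fderiv ℂ P z) Complex.I (1 : ℂ)
    rw [smul_eq_mul, mul_one, smul_eq_mul] at h
    exact h
  -- HasFDerivAt facts
  have hcast : HasFDerivAt (fun w => ((lam w : ℝ) : ℂ)) (Complex.ofRealCLM.comp l) z := by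
    simpa only [Function.comp_def, Complex.ofRealCLM_apply] using
      Complex.ofRealCLM.hasFDerivAt.comp z hld
  have hsq : HasFDerivAt (fun w => ((lam w : ℝ) : ℂ) ^ 2)
      (((lam z : ℝ) : ℂ) • (Complex.ofRealCLM.comp l)
        + ((lam z : ℝ) : ℂ) • (Complex.ofRealCLM.comp l)) z := by
    simp only [pow_two]; exact hcast.mul hcast
  have hinvR : HasFDerivAt (fun w => (lam w)⁻¹) ((-(lam z ^ 2)⁻¹) • l) z :=
    (hasDerivAt_inv hlz).comp_hasFDerivAt z hld
  have hinvC : HasFDerivAt (fun w => (((lam w)⁻¹ : ℝ) : ℂ))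
      (Complex.ofRealCLM.comp ((-(lam z ^ 2)⁻¹) • l)) z := by
    simpa only [Function.comp_def, Complex.ofRealCLM_apply] using
      Complex.ofRealCLM.hasFDerivAt.comp z hinvR
  have hlog' : HasFDerivAt (fun w => ((Real.log (lam w) : ℝ) : ℂ))
      (Complex.ofRealCLM.comp ((lam z)⁻¹ • l)) z := by
    simpa only [Function.comp_def, Complex.ofRealCLM_apply] using
      Complex.ofRealCLM.hasFDerivAt.comp z
        (((Real.hasDerivAt_log hlz).comp_hasFDerivAt z hld))
  have hPd : HasFDerivAt P ((fderiv ℂ P z).restrictScalars ℝ) z :=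
    hP0.hasFDerivAt.restrictScalars ℝ
  have hconj : HasFDerivAt (fun w => (starRingEnd ℂ) (P w))
      (((Complex.conjCLE : ℂ ≃L[ℝ] ℂ) : ℂ →L[ℝ] ℂ).comp
        ((fderiv ℂ P z).restrictScalars ℝ)) z := by
    simpa only [Function.comp_def, ContinuousLinearEquiv.coe_coe, Complex.conjCLE_apply] using
      ((Complex.conjCLE : ℂ ≃L[ℝ] ℂ) : ℂ →L[ℝ] ℂ).hasFDerivAt.comp z hPd
  have hinv2 := hinvC.mul hinvC
  have hgprod := hinv2.mul hconj
  -- differentiability of w ↦ dz logLam w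
  have hdzL : DifferentiableAt ℝ (fun w => dz (fun w' => ((Real.log (lam w') : ℝ) : ℂ)) w) z := by
    have hC2 : ContDiffAt ℝ 2 (fun w => ((Real.log (lam w) : ℝ) : ℂ)) z := by
      have h1 : ContDiffAt ℝ 2 (fun w => Real.log (lam w)) z :=
        (Real.contDiffAt_log.2 hlz).comp z hlamz
      exact Complex.ofRealCLM.contDiff.contDiffAt.comp z h1
    have hfd : ContDiffAt ℝ 1 (fderiv ℝ (fun w => ((Real.log (lam w) : ℝ) : ℂ))) z :=
      hC2.fderiv_right (by norm_num)
    have hD : DifferentiableAt ℝ (fderiv ℝ (fun w => ((Real.log (lam w) : ℝ) : ℂ))) z :=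
      hfd.differentiableAt (by norm_num)
    have h1 : DifferentiableAt ℝ
        (fun w => fderiv ℝ (fun w' => ((Real.log (lam w') : ℝ) : ℂ)) w 1) z :=
      ((ContinuousLinearMap.apply ℝ ℂ (1 : ℂ)).differentiable.differentiableAt).comp z hD
    have hI : DifferentiableAt ℝ
        (fun w => fderiv ℝ (fun w' => ((Real.log (lam w') : ℝ) : ℂ)) w Complex.I) z :=
      ((ContinuousLinearMap.apply ℝ ℂ (Complex.I : ℂ)).differentiable.differentiableAt).comp z hD
    exact ((h1.sub (hI.const_smul Complex.I)).const_smul (2⁻¹ : ℂ))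
  -- scalar constants
  set c : ℂ := (R : ℂ) ^ 2 * hbar with hc
  -- rewrite A₂ as a two-term combination
  have hA2fun : (fun w => c •
      (!![0, ((lam w : ℂ)) ^ 2; ((lam w : ℂ)) ^ (-2 : ℤ) * (starRingEnd ℂ) (P w), 0] :
        Matrix (Fin 2) (Fin 2) ℂ))
      = fun w => (c * ((lam w : ℝ) : ℂ) ^ 2) • (!![0, 1; 0, 0] : Matrix (Fin 2) (Fin 2) ℂ)
        + (c * ((((lam w)⁻¹ : ℝ) : ℂ) * (((lam w)⁻¹ : ℝ) : ℂ) * (starRingEnd ℂ) (P w))) •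
          (!![0, 0; 1, 0] : Matrix (Fin 2) (Fin 2) ℂ) := by
    have hzp : ∀ w, ((lam w : ℂ)) ^ (-2 : ℤ) = (((lam w)⁻¹ : ℝ) : ℂ) * (((lam w)⁻¹ : ℝ) : ℂ) := by
      intro w; push_cast; rw [show ((-2 : ℤ)) = -(2 : ℤ) from rfl, _root_.zpow_neg, zpow_two,
        mul_inv]
    simp only [hzp]
    funext w
    ext i j
    fin_cases i <;> fin_cases j <;>
      simp [Matrix.smul_apply, Matrix.add_apply, smul_eq_mul, mul_assoc, mul_comm, mul_left_comm]
  have hA1fun : (fun w => hbar⁻¹ • (!![0, P w; 1, 0] : Matrix (Fin 2) (Fin 2) ℂ)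
      - dz (fun w' => ((Real.log (lam w') : ℝ) : ℂ)) w • (!![1, 0; 0, -1] : Matrix (Fin 2) (Fin 2) ℂ))
      = fun w => (hbar⁻¹ * P w) • (!![0, 1; 0, 0] : Matrix (Fin 2) (Fin 2) ℂ)
        + hbar⁻¹ • (!![0, 0; 1, 0] : Matrix (Fin 2) (Fin 2) ℂ)
        - dz (fun w' => ((Real.log (lam w') : ℝ) : ℂ)) w •
          (!![1, 0; 0, -1] : Matrix (Fin 2) (Fin 2) ℂ) := by
    funext w
    ext i j
    fin_cases i <;> fin_cases j <;>
      simp [Matrix.smul_apply, Matrix.add_apply, Matrix.sub_apply, smul_eq_mul]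
  -- dz A₂
  have h1 := hsq.const_mul c
  have h2 := hgprod.const_mul c
  have hdzA₂ : dz A₂ z
      = dz (fun w => c * ((lam w : ℝ) : ℂ) ^ 2) z • (!![0, 1; 0, 0] : Matrix (Fin 2) (Fin 2) ℂ)
      + dz (fun w => c * ((((lam w)⁻¹ : ℝ) : ℂ) * (((lam w)⁻¹ : ℝ) : ℂ) * (starRingEnd ℂ) (P w))) z
        • (!![0, 0; 1, 0] : Matrix (Fin 2) (Fin 2) ℂ) := by
    rw [hA₂, hA2fun]
    exact dz_comb2 _ _ h1 h2 _ _
  -- dzbar A₁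
  have hdzbarA₁ : dzbar A₁ z
      = dzbar (fun w => hbar⁻¹ * P w) z • (!![0, 1; 0, 0] : Matrix (Fin 2) (Fin 2) ℂ)
      - dzbar (fun w => dz (fun w' => ((Real.log (lam w') : ℝ) : ℂ)) w) z •
        (!![1, 0; 0, -1] : Matrix (Fin 2) (Fin 2) ℂ) := by
    rw [hA₁, hA1fun]
    exact dzbar_comb3 _ _
      ((hP0.const_mul hbar⁻¹).hasFDerivAt.restrictScalars ℝ) hdzL.hasFDerivAt _ _ _
  have hhol : dzbar (fun w => hbar⁻¹ * P w) z = 0 := dzbar_holo (hP0.const_mul hbar⁻¹)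
  -- scalar values
  have Hlog : dz (fun w' => ((Real.log (lam w') : ℝ) : ℂ)) z
      = 2⁻¹ * ((lam z : ℂ))⁻¹ * ((u : ℂ) - Complex.I * (v : ℂ)) := by
    rw [dz_eval' hlog']
    simp only [ContinuousLinearMap.comp_apply, ContinuousLinearMap.smul_apply,
      Complex.ofRealCLM_apply, ← hu, ← hv, smul_eq_mul]
    push_cast
    field_simp
    try ring
  have Hsq : dz (fun w => c * ((lam w : ℝ) : ℂ) ^ 2) z
      = c * ((lam z : ℂ) * ((u : ℂ) - Complex.I * (v : ℂ))) := by
    rw [dz_eval' h1]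
    simp only [ContinuousLinearMap.smul_apply, ContinuousLinearMap.add_apply,
      ContinuousLinearMap.comp_apply, Complex.ofRealCLM_apply, ← hu, ← hv, smul_eq_mul]
    push_cast
    ring
  have Hg : dz (fun w => c * ((((lam w)⁻¹ : ℝ) : ℂ) * (((lam w)⁻¹ : ℝ) : ℂ)
        * (starRingEnd ℂ) (P w))) z
      = -c * (((lam z : ℂ))⁻¹ * ((lam z : ℂ))⁻¹ * ((lam z : ℂ))⁻¹)
          * ((u : ℂ) - Complex.I * (v : ℂ)) * (starRingEnd ℂ) (P z) := by
    rw [dz_eval' (F := fun w => c * ((((lam w)⁻¹ : ℝ) : ℂ) * (((lam w)⁻¹ : ℝ) : ℂ)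
        * (starRingEnd ℂ) (P w))) h2]
    simp only [ContinuousLinearMap.smul_apply, ContinuousLinearMap.add_apply,
      ContinuousLinearMap.comp_apply, ContinuousLinearMap.coe_restrictScalars',
      ContinuousLinearEquiv.coe_coe, Complex.conjCLE_apply, Complex.ofRealCLM_apply,
      ← hu, ← hv, hPI, smul_eq_mul, _root_.map_mul, Complex.conj_I, _root_.map_one, Pi.mul_apply]
    push_cast
    linear_combination (2⁻¹ * c * ((lam z : ℂ))⁻¹ * ((lam z : ℂ))⁻¹ *
      (starRingEnd ℂ) ((fderiv ℂ P z) 1)) * Complex.I_mul_I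
  -- |P z|²
  have habs : ((‖P z‖ : ℝ) : ℂ) ^ 2 = P z * (starRingEnd ℂ) (P z) := by
    rw [Complex.mul_conj, ← Complex.ofReal_pow, Complex.sq_norm]
  -- values of A₁ z, A₂ z
  have hA₁z : A₁ z = hbar⁻¹ • (!![0, P z; 1, 0] : Matrix (Fin 2) (Fin 2) ℂ)
      - (2⁻¹ * ((lam z : ℂ))⁻¹ * ((u : ℂ) - Complex.I * (v : ℂ))) •
        (!![1, 0; 0, -1] : Matrix (Fin 2) (Fin 2) ℂ) := by
    simp only [hA₁]
    rw [Hlog]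
  have hA₂z : A₂ z = c •
      (!![0, ((lam z : ℂ)) ^ 2; ((lam z : ℂ)) ^ (-2 : ℤ) * (starRingEnd ℂ) (P z), 0] :
        Matrix (Fin 2) (Fin 2) ℂ) := by
    simp only [hA₂]
  -- assemble
  rw [hdzA₂, hdzbarA₁, hhol, Hsq, Hg, hA₁z, hA₂z]
  have e1 : hbar * hbar⁻¹ = 1 := mul_inv_cancel₀ hh
  have e2 : ((lam z : ℂ)) * ((lam z : ℂ))⁻¹ = 1 := mul_inv_cancel₀ hlzc
  have e3 : ((lam z : ℂ)) ^ 2 * (((lam z : ℂ)) ^ 2)⁻¹ = 1 :=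
    mul_inv_cancel₀ (pow_ne_zero 2 hlzc)
  have hzp2 : ((lam z : ℂ)) ^ (-2 : ℤ) = ((lam z : ℂ))⁻¹ * ((lam z : ℂ))⁻¹ := by
    rw [show ((-2 : ℤ)) = -(2 : ℤ) from rfl, _root_.zpow_neg, zpow_two, mul_inv]
  ext i j
  fin_cases i <;> fin_cases j
  · simp [Matrix.mul_apply, Fin.sum_univ_two, Matrix.smul_apply, Matrix.add_apply,
      Matrix.sub_apply, smul_eq_mul, habs, hzp2]
    field_simp [hlzc, hh]
    ring
  · simp [Matrix.mul_apply, Fin.sum_univ_two, Matrix.smul_apply, Matrix.add_apply,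
      Matrix.sub_apply, smul_eq_mul, habs, hzp2]
    field_simp [hlzc, hh]
    try ring
  · simp [Matrix.mul_apply, Fin.sum_univ_two, Matrix.smul_apply, Matrix.add_apply,
      Matrix.sub_apply, smul_eq_mul, habs, hzp2]
    field_simp [hlzc, hh]
    ring
  · simp [Matrix.mul_apply, Fin.sum_univ_two, Matrix.smul_apply, Matrix.add_apply,
      Matrix.sub_apply, smul_eq_mul, habs, hzp2]
    field_simp [hlzc, hh]
    ring
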